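/- Let J be a finite set, v̄_j > 0 for j ∈ J, φ_j := φ_{v̄_j}, and ψ_j(z) := v̄_j/(e(1−z)²) for 0 ≤ z < 1 − 1/e and ψ_j(z) := 0 for 1 − 1/e ≤ z ≤ 1. Let Q_j : [0,1] → [0,1] be measurable for each j ∈ J and let U₀ ≥ 0. Define T(z) = Σ_{j∈J} φ_j(z)·Q_j(z) − U₀ − ∫_0^z Σ_{j∈J} ψ_j(s)·Q_j(s) ds. Then ∫_0^1 T(z) dz ≤ Σ_{j∈J} v̄_j / e. -/

import Mathlib

open MeasureTheory Set

lemma one_lt_exp1 : (1:ℝ) < Real.exp 1 := by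
  have := Real.add_one_lt_exp (x := 1) (by norm_num)
  linarith

lemma inv_e_pos : (0:ℝ) < 1 / Real.exp 1 := by positivity

lemma c_pos : (0:ℝ) < 1 - 1 / Real.exp 1 := by
  have := one_lt_exp1
  rw [sub_pos, div_lt_one (Real.exp_pos 1)]
  exact this

/-- The equal-revenue quantile function: `φ_{v̄}(z) = v̄/(e(1−z))` for
`z < 1 − 1/e` and `φ_{v̄}(z) = v̄` for `z ≥ 1 − 1/e`. -/
noncomputable def erQuantile (vb z : ℝ) : ℝ :=
  if z < 1 - 1 / Real.exp 1 then vb / (Real.exp 1 * (1 - z)) else vb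

/-- Its derivative off `z = 1 − 1/e`: `ψ(z) = v̄/(e(1−z)²)` for `z < 1 − 1/e`
and `0` for `z ≥ 1 − 1/e`. -/
noncomputable def erQuantileDeriv (vb z : ℝ) : ℝ :=
  if z < 1 - 1 / Real.exp 1 then vb / (Real.exp 1 * (1 - z) ^ 2) else 0


lemma erQuantile_measurable (vb : ℝ) : Measurable (erQuantile vb) := by
  unfold erQuantile
  exact Measurable.ite (measurableSet_Iio (a := 1 - 1 / Real.exp 1))
    (measurable_const.div ((measurable_const.sub measurable_id).const_mul _))
    measurable_const

lemma erQuantileDeriv_measurable (vb : ℝ) : Measurable (erQuantileDeriv vb) := by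
  unfold erQuantileDeriv
  exact Measurable.ite (measurableSet_Iio (a := 1 - 1 / Real.exp 1))
    (measurable_const.div ((((measurable_const.sub measurable_id).pow measurable_const)).const_mul _))
    measurable_const

lemma erQuantile_mem (vb : ℝ) (hvb : 0 < vb) (z : ℝ) :
    0 ≤ erQuantile vb z ∧ erQuantile vb z ≤ vb := by
  unfold erQuantile
  split_ifs with h
  · have h1 : 1 / Real.exp 1 < 1 - z := by linarith
    have he : (0:ℝ) < Real.exp 1 := Real.exp_pos 1
    have h2 : (1:ℝ) ≤ Real.exp 1 * (1 - z) := by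
      have := mul_lt_mul_of_pos_left h1 he
      rw [mul_one_div, div_self he.ne'] at this
      linarith
    constructor
    · positivity
    · exact div_le_self hvb.le h2
  · exact ⟨hvb.le, le_refl _⟩

lemma erQuantileDeriv_mem (vb : ℝ) (hvb : 0 < vb) (z : ℝ) :
    0 ≤ erQuantileDeriv vb z ∧ erQuantileDeriv vb z ≤ vb * Real.exp 1 := by
  unfold erQuantileDeriv
  split_ifs with h
  · have h1 : 1 / Real.exp 1 < 1 - z := by linarith
    have he : (0:ℝ) < Real.exp 1 := Real.exp_pos 1
    have hiep : (0:ℝ) < 1 / Real.exp 1 := by positivity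
    have h3 : (1 / Real.exp 1) ^ 2 ≤ (1 - z) ^ 2 := by nlinarith
    have key : Real.exp 1 * (1 / Real.exp 1) ^ 2 = 1 / Real.exp 1 := by
      rw [sq, ← mul_assoc, mul_one_div_cancel he.ne', one_mul]
    have h2 : 1 / Real.exp 1 ≤ Real.exp 1 * (1 - z) ^ 2 := by
      calc 1 / Real.exp 1 = Real.exp 1 * (1 / Real.exp 1) ^ 2 := key.symm
        _ ≤ _ := mul_le_mul_of_nonneg_left h3 he.le
    have hd : (0:ℝ) < Real.exp 1 * (1 - z) ^ 2 := by nlinarith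
    have h4 : 1 ≤ Real.exp 1 * (Real.exp 1 * (1 - z) ^ 2) := by
      calc (1:ℝ) = Real.exp 1 * (1 / Real.exp 1) := (mul_one_div_cancel he.ne').symm
        _ ≤ _ := mul_le_mul_of_nonneg_left h2 he.le
    constructor
    · positivity
    · rw [div_le_iff₀ hd]
      nlinarith [mul_le_mul_of_nonneg_left h4 hvb.le]
  · exact ⟨le_refl _, by positivity⟩

lemma key_identity (vb z : ℝ) :
    erQuantile vb z - (1 - z) * erQuantileDeriv vb z
      = if z < 1 - 1 / Real.exp 1 then 0 else vb := by
  unfold erQuantile erQuantileDeriv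
  split_ifs with h
  · have h1 : 1 / Real.exp 1 < 1 - z := by linarith
    have hiep : (0:ℝ) < 1 / Real.exp 1 := by positivity
    have h2 : (1:ℝ) - z ≠ 0 := by linarith
    field_simp
    ring
  · ring

lemma integrable_unit {f : ℝ → ℝ}
    (hf : AEStronglyMeasurable f (volume.restrict (Set.Ioc (0:ℝ) 1))) {C : ℝ}
    (hb : ∀ x ∈ Set.Ioc (0:ℝ) 1, |f x| ≤ C) :
    Integrable f (volume.restrict (Set.Ioc (0:ℝ) 1)) := by
  haveI : IsFiniteMeasure (volume.restrict (Set.Ioc (0:ℝ) 1)) :=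
    ⟨by simp [Real.volume_Ioc]⟩
  refine (integrable_const C).mono' hf ?_
  rw [ae_restrict_iff' measurableSet_Ioc]
  exact Filter.Eventually.of_forall fun x hx => by
    rw [Real.norm_eq_abs]; exact hb x hx

lemma fubini_triangle (g : ℝ → ℝ) (hm : Measurable g) (C : ℝ) (hb : ∀ s, |g s| ≤ C) :
    ∫ z in Set.Ioc (0:ℝ) 1, (∫ s in (0:ℝ)..z, g s)
      = ∫ s in Set.Ioc (0:ℝ) 1, (1 - s) * g s := by
  have hC : 0 ≤ C := le_trans (abs_nonneg _) (hb 0)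
  set μ := volume.restrict (Set.Ioc (0:ℝ) 1) with hμ
  haveI : IsFiniteMeasure μ := ⟨by simp [hμ, Real.volume_Ioc]⟩
  set F : ℝ → ℝ → ℝ := fun z s => if 0 < s ∧ s ≤ z then g s else 0 with hF
  have hFm : Measurable (Function.uncurry F) := by
    apply Measurable.ite _ (hm.comp measurable_snd) measurable_const
    exact MeasurableSet.inter (measurableSet_lt measurable_const measurable_snd)
      (measurableSet_le measurable_snd measurable_fst)
  have h1 : ∀ z ∈ Set.Ioc (0:ℝ) 1, (∫ s in (0:ℝ)..z, g s) = ∫ s, F z s ∂μ := by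
    intro z hz
    rw [intervalIntegral.integral_of_le hz.1.le]
    have hind : ∀ s, F z s = Set.indicator (Set.Ioc 0 z) g s := by
      intro s; simp [hF, Set.indicator_apply, Set.mem_Ioc]
    simp_rw [hind]
    rw [hμ, integral_indicator measurableSet_Ioc,
      Measure.restrict_restrict measurableSet_Ioc, Set.Ioc_inter_Ioc, max_self,
      min_eq_left hz.2]
  have hInt : Integrable (Function.uncurry F) (μ.prod μ) := by
    refine (integrable_const C).mono' hFm.aestronglyMeasurable ?_
    refine Filter.Eventually.of_forall fun p => ?_
    rw [Real.norm_eq_abs]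
    simp only [Function.uncurry, hF]
    split_ifs
    · exact hb _
    · simpa using hC
  have hswap := MeasureTheory.integral_integral_swap (f := F) (μ := μ) (ν := μ) hInt
  have h2 : ∀ s ∈ Set.Ioc (0:ℝ) 1, (∫ z, F z s ∂μ) = (1 - s) * g s := by
    intro s hs
    have hind : ∀ z, F z s = Set.indicator (Set.Ici s) (fun _ => g s) z := by
      intro z
      simp only [hF, Set.indicator_apply, Set.mem_Ici]
      by_cases hzs : s ≤ z
      · simp [hzs, hs.1]
      · simp [hzs]
    simp_rw [hind]
    rw [hμ, integral_indicator measurableSet_Ici,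
      Measure.restrict_restrict measurableSet_Ici]
    have hIcc : Set.Ici s ∩ Set.Ioc 0 1 = Set.Icc s 1 := by
      ext z
      simp only [Set.mem_inter_iff, Set.mem_Ici, Set.mem_Ioc, Set.mem_Icc]
      constructor
      · rintro ⟨h1, _, h3⟩; exact ⟨h1, h3⟩
      · rintro ⟨h1, h3⟩; exact ⟨h1, lt_of_lt_of_le hs.1 h1, h3⟩
    rw [hIcc, setIntegral_const, measureReal_def, Real.volume_Icc, ENNReal.toReal_ofReal (by linarith [hs.2]),
      smul_eq_mul]
  calc ∫ z in Set.Ioc (0:ℝ) 1, (∫ s in (0:ℝ)..z, g s)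
      = ∫ z, (∫ s, F z s ∂μ) ∂μ := setIntegral_congr_fun measurableSet_Ioc h1
    _ = ∫ s, (∫ z, F z s ∂μ) ∂μ := hswap
    _ = ∫ s in Set.Ioc (0:ℝ) 1, (1 - s) * g s := setIntegral_congr_fun measurableSet_Ioc h2


/-- the core revenue bound of Proposition 2: with interim
allocations `Q_j : [0,1] → [0,1]`, lowest-type utility `U₀ ≥ 0`, and interim
payment `T(z) = Σ_j φ_j(z)·Q_j(z) − U₀ − ∫_0^z Σ_j ψ_j(s)·Q_j(s) ds`, the
expected revenue satisfies `∫_0^1 T(z) dz ≤ Σ_j v̄_j/e`. -/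
theorem stmt_9 {J : Type*} [Fintype J] (vbar : J → ℝ) (hvbar : ∀ j, 0 < vbar j)
    (Q : J → ℝ → ℝ) (hQm : ∀ j, Measurable (Q j))
    (hQ : ∀ j, ∀ z ∈ Set.Icc (0:ℝ) 1, 0 ≤ Q j z ∧ Q j z ≤ 1)
    (U0 : ℝ) (hU0 : 0 ≤ U0) (T : ℝ → ℝ)
    (hT : ∀ z, T z = (∑ j, erQuantile (vbar j) z * Q j z) - U0
      - ∫ s in (0:ℝ)..z, ∑ j, erQuantileDeriv (vbar j) s * Q j s) :
    (∫ z in (0:ℝ)..1, T z) ≤ ∑ j, vbar j / Real.exp 1 := by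
  classical
  have he : (0:ℝ) < Real.exp 1 := Real.exp_pos 1
  -- truncated allocations
  set Q' : J → ℝ → ℝ := fun j z => max 0 (min (Q j z) 1) with hQ'def
  have hQ'm : ∀ j, Measurable (Q' j) :=
    fun j => measurable_const.max ((hQm j).min measurable_const)
  have hQ'mem : ∀ j z, 0 ≤ Q' j z ∧ Q' j z ≤ 1 := fun j z =>
    ⟨le_max_left _ _, max_le zero_le_one (min_le_right _ _)⟩
  have hQ'eq : ∀ j, ∀ z ∈ Set.Icc (0:ℝ) 1, Q' j z = Q j z := by
    intro j z hz
    obtain ⟨h0, h1⟩ := hQ j z hz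
    simp [hQ'def, min_eq_left h1, max_eq_right h0]
  set g' : ℝ → ℝ := fun s => ∑ j, erQuantileDeriv (vbar j) s * Q' j s with hg'def
  set A' : ℝ → ℝ := fun z => ∑ j, erQuantile (vbar j) z * Q' j z with hA'def
  set C : ℝ := ∑ j : J, vbar j * Real.exp 1 with hCdef
  have hg'm : Measurable g' :=
    Finset.measurable_sum _ fun j _ => (erQuantileDeriv_measurable (vbar j)).mul (hQ'm j)
  have hA'm : Measurable A' :=
    Finset.measurable_sum _ fun j _ => (erQuantile_measurable (vbar j)).mul (hQ'm j)
  have hg'nonneg : ∀ s, 0 ≤ g' s := fun s =>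
    Finset.sum_nonneg fun j _ =>
      mul_nonneg (erQuantileDeriv_mem _ (hvbar j) s).1 (hQ'mem j s).1
  have hg'bd : ∀ s, |g' s| ≤ C := by
    intro s
    rw [abs_of_nonneg (hg'nonneg s)]
    refine Finset.sum_le_sum fun j _ => ?_
    calc erQuantileDeriv (vbar j) s * Q' j s
        ≤ erQuantileDeriv (vbar j) s * 1 :=
          mul_le_mul_of_nonneg_left (hQ'mem j s).2 (erQuantileDeriv_mem _ (hvbar j) s).1
      _ = erQuantileDeriv (vbar j) s := mul_one _
      _ ≤ vbar j * Real.exp 1 := (erQuantileDeriv_mem _ (hvbar j) s).2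
  have hA'bd : ∀ z, |A' z| ≤ ∑ j : J, vbar j := by
    intro z
    have h0 : 0 ≤ A' z := Finset.sum_nonneg fun j _ =>
      mul_nonneg (erQuantile_mem _ (hvbar j) z).1 (hQ'mem j z).1
    rw [abs_of_nonneg h0]
    refine Finset.sum_le_sum fun j _ => ?_
    calc erQuantile (vbar j) z * Q' j z
        ≤ erQuantile (vbar j) z * 1 :=
          mul_le_mul_of_nonneg_left (hQ'mem j z).2 (erQuantile_mem _ (hvbar j) z).1
      _ = erQuantile (vbar j) z := mul_one _
      _ ≤ vbar j := (erQuantile_mem _ (hvbar j) z).2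
  -- rewrite T on (0,1]
  rw [intervalIntegral.integral_of_le zero_le_one]
  have hTeq : Set.EqOn T (fun z => A' z - U0 - ∫ s in (0:ℝ)..z, g' s) (Set.Ioc 0 1) := by
    intro z hz
    have hzIcc : z ∈ Set.Icc (0:ℝ) 1 := Set.Ioc_subset_Icc_self hz
    rw [hT z]
    have e1 : (∑ j, erQuantile (vbar j) z * Q j z) = A' z :=
      Finset.sum_congr rfl fun j _ => by rw [hQ'eq j z hzIcc]
    have e2 : (∫ s in (0:ℝ)..z, ∑ j, erQuantileDeriv (vbar j) s * Q j s)
        = ∫ s in (0:ℝ)..z, g' s := by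
      apply intervalIntegral.integral_congr
      intro s hs
      rw [Set.uIcc_of_le hz.1.le] at hs
      have hsIcc : s ∈ Set.Icc (0:ℝ) 1 := ⟨hs.1, hs.2.trans hzIcc.2⟩
      exact Finset.sum_congr rfl fun j _ => by rw [hQ'eq j s hsIcc]
    rw [e1, e2]
  rw [setIntegral_congr_fun measurableSet_Ioc hTeq]
  -- integrabilities
  have hA'int : Integrable A' (volume.restrict (Set.Ioc (0:ℝ) 1)) :=
    integrable_unit hA'm.aestronglyMeasurable fun x _ => hA'bd x
  have hg'ii : ∀ a b : ℝ, IntervalIntegrable g' volume a b := by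
    intro a b
    rw [intervalIntegrable_iff]
    haveI : IsFiniteMeasure (volume.restrict (Set.uIoc a b)) :=
      ⟨by rw [Measure.restrict_apply_univ]; exact measure_Ioc_lt_top⟩
    refine (integrable_const C).mono' hg'm.aestronglyMeasurable ?_
    exact Filter.Eventually.of_forall fun x => by rw [Real.norm_eq_abs]; exact hg'bd x
  have hHcont : Continuous (fun z => ∫ s in (0:ℝ)..z, g' s) :=
    intervalIntegral.continuous_primitive hg'ii 0
  have hHbd : ∀ z ∈ Set.Ioc (0:ℝ) 1, |∫ s in (0:ℝ)..z, g' s| ≤ C := by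
    intro z hz
    have := intervalIntegral.norm_integral_le_of_norm_le_const
      (a := 0) (b := z) (C := C) (f := g')
      (fun x _ => by rw [Real.norm_eq_abs]; exact hg'bd x)
    rw [Real.norm_eq_abs] at this
    calc |∫ s in (0:ℝ)..z, g' s| ≤ C * |z - 0| := this
      _ ≤ C * 1 := by
          have hC : 0 ≤ C := le_trans (abs_nonneg _) (hg'bd 0)
          have : |z - 0| ≤ 1 := by rw [sub_zero, abs_of_pos hz.1]; exact hz.2
          nlinarith
      _ = C := mul_one _
  have hHint : Integrable (fun z => ∫ s in (0:ℝ)..z, g' s)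
      (volume.restrict (Set.Ioc (0:ℝ) 1)) :=
    integrable_unit hHcont.aestronglyMeasurable hHbd
  have hU0int : Integrable (fun _ : ℝ => U0) (volume.restrict (Set.Ioc (0:ℝ) 1)) :=
    integrable_unit aestronglyMeasurable_const fun x _ => le_refl |U0|
  -- split the integral
  have hs1 : (∫ z in Set.Ioc (0:ℝ) 1, (A' z - U0 - ∫ s in (0:ℝ)..z, g' s))
      = (∫ z in Set.Ioc (0:ℝ) 1, (A' z - U0))
        - ∫ z in Set.Ioc (0:ℝ) 1, (∫ s in (0:ℝ)..z, g' s) :=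
    integral_sub (hA'int.sub hU0int) hHint
  have hs2 : (∫ z in Set.Ioc (0:ℝ) 1, (A' z - U0))
      = (∫ z in Set.Ioc (0:ℝ) 1, A' z) - ∫ _ in Set.Ioc (0:ℝ) 1, U0 :=
    integral_sub hA'int hU0int
  have hU0val : (∫ _ in Set.Ioc (0:ℝ) 1, U0) = U0 := by
    rw [setIntegral_const, measureReal_def, Real.volume_Ioc]
    norm_num
  rw [hs1, hs2, hU0val, fubini_triangle g' hg'm C hg'bd]
  -- combine the two remaining integrals
  have hWint : Integrable (fun s => (1 - s) * g' s) (volume.restrict (Set.Ioc (0:ℝ) 1)) := by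
    refine integrable_unit ((measurable_const.sub measurable_id).mul hg'm).aestronglyMeasurable
      (C := C) fun x hx => ?_
    rw [abs_mul]
    calc |1 - x| * |g' x| ≤ 1 * |g' x| := by
          have h1 : |1 - x| ≤ 1 := by
            rw [abs_le]; constructor <;> [linarith [hx.2]; linarith [hx.1]]
          exact mul_le_mul_of_nonneg_right h1 (abs_nonneg _)
      _ = |g' x| := one_mul _
      _ ≤ C := hg'bd x
  have hs3 : (∫ z in Set.Ioc (0:ℝ) 1, (A' z - (1 - z) * g' z))
      = (∫ z in Set.Ioc (0:ℝ) 1, A' z) - ∫ z in Set.Ioc (0:ℝ) 1, (1 - z) * g' z :=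
    integral_sub hA'int hWint
  -- pointwise bound
  set c : ℝ := 1 - 1 / Real.exp 1 with hcdef
  set B : ℝ → ℝ := fun z => ∑ j : J, (if z < c then 0 else vbar j) with hBdef
  have hBint : Integrable B (volume.restrict (Set.Ioc (0:ℝ) 1)) := by
    refine integrable_unit ?_ (C := ∑ j : J, vbar j) fun x _ => ?_
    · exact (Finset.measurable_sum _ fun j _ =>
        Measurable.ite (measurableSet_Iio (a := c)) measurable_const
          measurable_const).aestronglyMeasurable
    · have h0 : 0 ≤ B x := Finset.sum_nonneg fun j _ => by
        split_ifs; exacts [le_refl 0, (hvbar j).le]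
      rw [abs_of_nonneg h0]
      refine Finset.sum_le_sum fun j _ => ?_
      split_ifs; exacts [(hvbar j).le, le_refl _]
  have hpt : ∀ z ∈ Set.Ioc (0:ℝ) 1, A' z - (1 - z) * g' z ≤ B z := by
    intro z _
    have hsum : A' z - (1 - z) * g' z
        = ∑ j, (erQuantile (vbar j) z - (1 - z) * erQuantileDeriv (vbar j) z) * Q' j z := by
      rw [hA'def, hg'def, Finset.mul_sum, ← Finset.sum_sub_distrib]
      exact Finset.sum_congr rfl fun j _ => by ring
    rw [hsum, hBdef]
    refine Finset.sum_le_sum fun j _ => ?_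
    rw [key_identity]
    split_ifs
    · simp
    · calc vbar j * Q' j z ≤ vbar j * 1 :=
          mul_le_mul_of_nonneg_left (hQ'mem j z).2 (hvbar j).le
        _ = vbar j := mul_one _
  have hmono : (∫ z in Set.Ioc (0:ℝ) 1, (A' z - (1 - z) * g' z))
      ≤ ∫ z in Set.Ioc (0:ℝ) 1, B z :=
    setIntegral_mono_on (hA'int.sub hWint) hBint measurableSet_Ioc hpt
  -- value of ∫ B
  have hBval : (∫ z in Set.Ioc (0:ℝ) 1, B z) = ∑ j, vbar j / Real.exp 1 := by
    rw [hBdef]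
    rw [integral_finset_sum _ (fun j _ => integrable_unit
      (Measurable.ite (measurableSet_Iio (a := c)) measurable_const
        measurable_const).aestronglyMeasurable (C := vbar j) fun x _ => by
          split_ifs <;> simp [(hvbar j).le, abs_of_pos (hvbar j)])]
    refine Finset.sum_congr rfl fun j _ => ?_
    have hind : (fun z => if z < c then (0:ℝ) else vbar j)
        = Set.indicator (Set.Ici c) (fun _ => vbar j) := by
      ext z
      simp only [Set.indicator_apply, Set.mem_Ici, not_lt]
      by_cases h : z < c
      · simp [h, not_le.mpr h]
      · simp [h, not_lt.mp h]
    rw [hind, integral_indicator measurableSet_Ici,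
      Measure.restrict_restrict measurableSet_Ici]
    have hc0 : (0:ℝ) < c := c_pos
    have hIcc : Set.Ici c ∩ Set.Ioc 0 1 = Set.Icc c 1 := by
      ext z
      simp only [Set.mem_inter_iff, Set.mem_Ici, Set.mem_Ioc, Set.mem_Icc]
      constructor
      · rintro ⟨h1, _, h3⟩; exact ⟨h1, h3⟩
      · rintro ⟨h1, h3⟩; exact ⟨h1, lt_of_lt_of_le hc0 h1, h3⟩
    have hc1 : (0:ℝ) ≤ 1 - c := by
      rw [hcdef]; simp; positivity
    rw [hIcc, setIntegral_const, measureReal_def, Real.volume_Icc, ENNReal.toReal_ofReal hc1, smul_eq_mul,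
      hcdef]
    field_simp
    ring
  rw [hBval] at hmono
  linarith
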